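/- The total number of histories of a finite tree t on n vertices (orderings of the vertices such that every prefix induces a connected subgraph, with arbitrary starting vertex) equals the sum over all vertices u of (n-1)! divided by the product over v ≠ u of n_v^{(u)}. -/

import Mathlib

open scoped Classical
open SimpleGraph Finset

variable {V : Type*}

/-- A history of a graph `G`: an ordering of all vertices (no repeats) such that
every nonempty prefix induces a connected subgraph. -/
def IsHistory (G : SimpleGraph V) (l : List V) : Prop :=
  l.Nodup ∧ (∀ v : V, v ∈ l) ∧ ∀ k : ℕ, 1 ≤ k → (G.induce {v | v ∈ l.take k}).Connected

/-- Number of histories of `G` rooted at (i.e. starting with) `u`. -/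
noncomputable def nHist (G : SimpleGraph V) (u : V) : ℕ :=
  Nat.card {l : List V // IsHistory G l ∧ l.head? = some u}

/-- Total number of histories of `G`. -/
noncomputable def nHistAll (G : SimpleGraph V) : ℕ :=
  Nat.card {l : List V // IsHistory G l}

/-- Size of the subtree of `G` rooted at `v` away from `u`: the number of vertices `w`
such that every walk from `w` to `u` passes through `v`. -/
noncomputable def subtreeSize (G : SimpleGraph V) (u v : V) : ℕ :=
  Nat.card {w : V | ∀ p : G.Walk w u, v ∈ p.support}

set_option linter.unusedSectionVars false
set_option maxHeartbeats 1000000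

section Aux

variable [Fintype V] [DecidableEq V]

namespace HistAux
variable (par : V → V)
def Anc (w x : V) : Prop := ∃ k : ℕ, par^[k] x = w

lemma anc_refl (x : V) : Anc par x x := ⟨0, rfl⟩
lemma anc_par (x : V) : Anc par (par x) x := ⟨1, rfl⟩

lemma anc_trans {v w x : V} (h1 : Anc par v w) (h2 : Anc par w x) : Anc par v x := by
  obtain ⟨j, rfl⟩ := h1; obtain ⟨k, rfl⟩ := h2
  exact ⟨j + k, (Function.iterate_add_apply par j k x)⟩

noncomputable def descF (v : V) : Finset V := univ.filter (fun x => Anc par v x)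

noncomputable def minset (S : Finset V) : Finset V :=
  S.filter (fun m => ∀ w ∈ S, Anc par w m → w = m)

noncomputable def LEs (S : Finset V) : Finset (List V) :=
  S.toList.permutations.toFinset.filter (fun l => l.Pairwise (fun a b => ¬ Anc par b a))

lemma mem_LEs {S : Finset V} {l : List V} :
    l ∈ LEs par S ↔ (l.Nodup ∧ l.toFinset = S) ∧ l.Pairwise (fun a b => ¬ Anc par b a) := by
  simp only [LEs, mem_filter, List.mem_toFinset, List.mem_permutations]
  constructor
  · rintro ⟨hp, h2⟩
    exact ⟨⟨hp.symm.nodup S.nodup_toList, by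
      rw [List.toFinset_eq_of_perm _ _ hp, Finset.toList_toFinset]⟩, h2⟩
  · rintro ⟨⟨h1, h2⟩, h3⟩
    refine ⟨List.perm_of_nodup_nodup_toFinset_eq h1 S.nodup_toList ?_, h3⟩
    rw [h2, Finset.toList_toFinset]

def Closed (S : Finset V) : Prop := ∀ x ∈ S, ∀ w, Anc par x w → w ∈ S

variable {depth : V → ℕ} (hd : ∀ v, par v ≠ v → depth (par v) < depth v)

include hd

lemma depth_anc_le {w x : V} (h : Anc par w x) : depth w ≤ depth x := by
  obtain ⟨k, rfl⟩ := h
  induction k with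
  | zero => rfl
  | succ n ih =>
    rw [Function.iterate_succ_apply']
    rcases eq_or_ne (par (par^[n] x)) (par^[n] x) with h | h
    · rw [h]; exact ih
    · exact (hd _ h).le.trans ih

lemma depth_anc_lt {w x : V} (h : Anc par w x) (hne : w ≠ x) : depth w < depth x := by
  obtain ⟨k, hk⟩ := h
  rcases k with _ | n
  · exact absurd hk.symm hne
  rcases eq_or_ne (par x) x with h1 | h1
  · exfalso; apply hne
    rw [← hk]
    clear hk hne
    induction n with
    | zero => exact h1
    | succ m ih => rw [Function.iterate_succ_apply, h1]; exact ih
  · rw [Function.iterate_succ_apply] at hk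
    calc depth w ≤ depth (par x) := depth_anc_le par hd ⟨n, hk⟩
    _ < depth x := hd _ h1

lemma exists_min {S : Finset V} {x : V} (hx : x ∈ S) :
    ∃ m ∈ minset par S, Anc par m x := by
  have hA : x ∈ univ.filter (fun w => Anc par w x ∧ w ∈ S) := by
    simp [anc_refl, hx]
  obtain ⟨m, hm, hmin⟩ := Finset.exists_min_image _ depth ⟨x, hA⟩
  simp only [mem_filter, mem_univ, true_and] at hm
  refine ⟨m, ?_, hm.1⟩
  simp only [minset, mem_filter]
  refine ⟨hm.2, fun w hw hanc => ?_⟩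
  by_contra hne
  have hwA : w ∈ univ.filter (fun w => Anc par w x ∧ w ∈ S) := by
    simp [anc_trans par hanc hm.1, hw]
  exact absurd (depth_anc_lt par hd hanc hne) (hmin w hwA).not_gt

lemma min_unique {S : Finset V} {m₁ m₂ x : V} (h1 : m₁ ∈ minset par S)
    (h2 : m₂ ∈ minset par S) (ha1 : Anc par m₁ x) (ha2 : Anc par m₂ x) : m₁ = m₂ := by
  simp only [minset, mem_filter] at h1 h2
  obtain ⟨k₁, hk₁⟩ := ha1; obtain ⟨k₂, hk₂⟩ := ha2
  rcases le_total k₁ k₂ with h | h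
  · have : Anc par m₂ m₁ := ⟨k₂ - k₁, by
      rw [hk₁.symm, ← Function.iterate_add_apply, Nat.sub_add_cancel h, hk₂]⟩
    exact (h1.2 m₂ h2.1 this).symm
  · have : Anc par m₁ m₂ := ⟨k₁ - k₂, by
      rw [hk₂.symm, ← Function.iterate_add_apply, Nat.sub_add_cancel h, hk₁]⟩
    exact h2.2 m₁ h1.1 this

lemma sum_descF {S : Finset V} (hS : Closed par S) :
    ∑ m ∈ minset par S, (descF par m).card = S.card := by
  rw [← Finset.card_biUnion]
  · congr 1
    ext x
    simp only [mem_biUnion, descF, mem_filter, mem_univ, true_and]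
    constructor
    · rintro ⟨m, hm, hanc⟩
      exact hS m (Finset.mem_of_mem_filter m hm) x hanc
    · intro hx
      exact exists_min par hd hx
  · intro m₁ h1 m₂ h2 hne
    simp only [Finset.disjoint_left, descF, mem_filter, mem_univ, true_and]
    rintro x hx1 hx2
    exact hne (min_unique par hd h1 h2 hx1 hx2)

lemma LEs_eq_biUnion {S : Finset V} (hS : S.Nonempty) :
    LEs par S = (minset par S).biUnion (fun m => (LEs par (S.erase m)).image (List.cons m)) := by
  ext l
  simp only [mem_biUnion, Finset.mem_image]
  constructor
  · intro hl
    rw [mem_LEs] at hl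
    obtain ⟨⟨hnd, hft⟩, hpw⟩ := hl
    match l with
    | [] => exact absurd hft.symm (by simpa using hS.ne_empty)
    | h :: t =>
      have hht : h ∉ t := (List.nodup_cons.mp hnd).1
      have hhS : h ∈ S := by rw [← hft]; simp
      have htft : t.toFinset = S.erase h := by
        rw [← hft, List.toFinset_cons, Finset.erase_insert (by simpa using hht)]
      refine ⟨h, ?_, t, ?_, rfl⟩
      · simp only [minset, mem_filter]
        refine ⟨hhS, fun w hw hanc => ?_⟩
        by_contra hne
        have hwt : w ∈ t := by
          have hwl : w ∈ (h :: t).toFinset := by rw [hft]; exact hw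
          simp only [List.toFinset_cons, Finset.mem_insert, List.mem_toFinset] at hwl
          tauto
        exact (List.pairwise_cons.mp hpw).1 w hwt hanc
      · rw [mem_LEs]
        exact ⟨⟨(List.nodup_cons.mp hnd).2, htft⟩, List.Pairwise.of_cons hpw⟩
  · rintro ⟨m, hm, t, ht, rfl⟩
    rw [mem_LEs] at ht ⊢
    obtain ⟨⟨hnd, hft⟩, hpw⟩ := ht
    have hmS : m ∈ S := Finset.mem_of_mem_filter m hm
    have hmt : m ∉ t := by
      intro h; have : m ∈ S.erase m := by rw [← hft]; simpa using h
      simp at this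
    refine ⟨⟨List.nodup_cons.mpr ⟨hmt, hnd⟩, ?_⟩, ?_⟩
    · rw [List.toFinset_cons, hft, Finset.insert_erase hmS]
    · refine List.pairwise_cons.mpr ⟨fun b hb hanc => ?_, hpw⟩
      have hbe : b ∈ S.erase m := by rw [← hft]; simpa using hb
      simp only [minset, mem_filter] at hm
      exact (Finset.ne_of_mem_erase hbe) (hm.2 b (Finset.mem_of_mem_erase hbe) hanc)

end HistAux

namespace HistAux
variable {par : V → V} {depth : V → ℕ} (hd : ∀ v, par v ≠ v → depth (par v) < depth v)
include hd

lemma closed_erase {S : Finset V} (hcl : Closed par S) {m : V} (hm : m ∈ minset par S) :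
    Closed par (S.erase m) := by
  intro x hx w hanc
  have hxS : x ∈ S := Finset.mem_of_mem_erase hx
  refine Finset.mem_erase.mpr ⟨?_, hcl x hxS w hanc⟩
  rintro rfl
  simp only [minset, mem_filter] at hm
  exact Finset.ne_of_mem_erase hx (hm.2 x hxS hanc)

lemma key_count (n : ℕ) : ∀ S : Finset V, S.card = n → Closed par S →
    (LEs par S).card * ∏ v ∈ S, (descF par v).card = n.factorial := by
  induction n with
  | zero =>
    intro S hcard _
    rw [Finset.card_eq_zero] at hcard; subst hcard
    have hl : LEs par (∅ : Finset V) = {[]} := by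
      ext l
      rw [mem_LEs]
      simp only [Finset.mem_singleton]
      constructor
      · rintro ⟨⟨-, h2⟩, -⟩
        exact List.toFinset_eq_empty_iff l |>.mp h2
      · rintro rfl; simp
    simp [hl]
  | succ n ih =>
    intro S hcard hcl
    have hS : S.Nonempty := by rw [← Finset.card_pos, hcard]; omega
    have hcards : (LEs par S).card = ∑ m ∈ minset par S, (LEs par (S.erase m)).card := by
      rw [LEs_eq_biUnion par hd hS, Finset.card_biUnion]
      · refine Finset.sum_congr rfl fun m _ => ?_
        exact Finset.card_image_of_injective _ (fun a b h => by injection h)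
      · intro m₁ h1 m₂ h2 hne
        simp only [Finset.disjoint_left, Finset.mem_image]
        rintro l ⟨t₁, -, rfl⟩ ⟨t₂, -, h⟩
        injection h with h' h''
        exact hne h'.symm
    rw [hcards, Finset.sum_mul]
    have : ∀ m ∈ minset par S,
        (LEs par (S.erase m)).card * ∏ v ∈ S, (descF par v).card
          = (descF par m).card * n.factorial := by
      intro m hm
      have hmS : m ∈ S := Finset.mem_of_mem_filter m hm
      rw [← Finset.mul_prod_erase S _ hmS, ← mul_assoc, mul_comm (LEs par (S.erase m)).card,
        mul_assoc, ih (S.erase m) (by rw [Finset.card_erase_of_mem hmS, hcard]; rfl)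
          (closed_erase hd hcl hm)]
    rw [Finset.sum_congr rfl this, ← Finset.sum_mul, sum_descF par hd hcl, hcard,
      Nat.factorial_succ]

end HistAux


namespace TreeAux

open SimpleGraph HistAux

variable (G : SimpleGraph V) (hG : G.IsTree) (u : V)

noncomputable def tPath (v : V) : G.Walk v u := (hG.existsUnique_path v u).choose

lemma tPath_isPath (v : V) : (tPath G hG u v).IsPath := (hG.existsUnique_path v u).choose_spec.1

lemma tPath_unique {v : V} (p : G.Walk v u) (hp : p.IsPath) : p = tPath G hG u v :=
  (hG.existsUnique_path v u).choose_spec.2 p hp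

noncomputable def gpar (v : V) : V := (tPath G hG u v).getVert 1

noncomputable def gdepth (v : V) : ℕ := (tPath G hG u v).length

lemma tPath_self : tPath G hG u u = Walk.nil := (tPath_unique G hG u Walk.nil Walk.IsPath.nil).symm

lemma gpar_self : gpar G hG u u = u := by rw [gpar, tPath_self]; rfl

lemma cons_spec {v : V} (hne : v ≠ u) : ∃ h : G.Adj v (gpar G hG u v),
    tPath G hG u v = Walk.cons h (tPath G hG u (gpar G hG u v)) := by
  obtain ⟨w, h, q, hq⟩ := Walk.exists_eq_cons_of_ne hne (tPath G hG u v)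
  have hw : gpar G hG u v = w := by
    rw [gpar, hq]
    simp [Walk.getVert]
  subst hw
  have hq' : q = tPath G hG u (gpar G hG u v) := by
    apply tPath_unique
    have := tPath_isPath G hG u v
    rw [hq] at this
    exact this.of_cons
  exact ⟨h, by rw [hq, hq']⟩

lemma adj_gpar {v : V} (hne : v ≠ u) : G.Adj v (gpar G hG u v) := (cons_spec G hG u hne).choose

lemma gdepth_gpar {v : V} (hne : v ≠ u) : gdepth G hG u (gpar G hG u v) + 1 = gdepth G hG u v := by
  obtain ⟨h, hq⟩ := cons_spec G hG u hne
  rw [gdepth, gdepth, hq, Walk.length_cons]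

lemma hd_gpar : ∀ v, gpar G hG u v ≠ v → gdepth G hG u (gpar G hG u v) < gdepth G hG u v := by
  intro v hne'
  have hne : v ≠ u := by intro h; rw [h] at hne'; exact hne' (gpar_self G hG u)
  rw [← gdepth_gpar G hG u hne]; omega

lemma iterate_gpar_self (k : ℕ) : (gpar G hG u)^[k] u = u := by
  induction k with
  | zero => rfl
  | succ n ih => rw [Function.iterate_succ_apply', ih, gpar_self]

lemma depth_zero_eq {v : V} (h : gdepth G hG u v = 0) : v = u :=
  Walk.eq_of_length_eq_zero h

lemma anc_self_iff (v : V) : Anc (gpar G hG u) v u ↔ v ∈ (tPath G hG u u).support := by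
  rw [tPath_self]
  constructor
  · rintro ⟨k, rfl⟩
    rw [iterate_gpar_self]
    simp
  · intro h
    simp only [Walk.support_nil, List.mem_singleton] at h
    exact ⟨0, h.symm⟩

lemma anc_iff_mem : ∀ (n : ℕ) (x : V), gdepth G hG u x ≤ n →
    ∀ v, Anc (gpar G hG u) v x ↔ v ∈ (tPath G hG u x).support := by
  intro n
  induction n with
  | zero =>
    intro x hx v
    obtain rfl : x = u := depth_zero_eq G hG u (Nat.le_zero.mp hx)
    exact anc_self_iff G hG _ v
  | succ n ih =>
    intro x hx v
    rcases eq_or_ne x u with rfl | hne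
    · exact anc_self_iff G hG _ v
    obtain ⟨h, hq⟩ := cons_spec G hG u hne
    have hdep : gdepth G hG u (gpar G hG u x) ≤ n := by
      have := gdepth_gpar G hG u hne; omega
    rw [hq, Walk.support_cons, List.mem_cons, ← ih _ hdep v]
    constructor
    · rintro ⟨k, hk⟩
      rcases k with _ | m
      · exact Or.inl hk.symm
      · rw [Function.iterate_succ_apply] at hk
        exact Or.inr ⟨m, hk⟩
    · rintro (rfl | hanc)
      · exact anc_refl _ v
      · exact anc_trans _ hanc (anc_par _ x)


lemma anc_iff (v x : V) : Anc (gpar G hG u) v x ↔ v ∈ (tPath G hG u x).support :=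
  anc_iff_mem G hG u (gdepth G hG u x) x le_rfl v

lemma anc_u_all (x : V) : Anc (gpar G hG u) u x :=
  (anc_iff G hG u u x).mpr (Walk.end_mem_support _)

lemma subtree_eq (v : V) : subtreeSize G u v = (descF (gpar G hG u) v).card := by
  have he : ∀ w : V, (∀ p : G.Walk w u, v ∈ p.support) ↔ w ∈ descF (gpar G hG u) v := by
    intro w
    simp only [descF, Finset.mem_filter, Finset.mem_univ, true_and]
    constructor
    · intro h
      exact (anc_iff G hG u v w).mpr (h (tPath G hG u w))
    · intro h p
      have hb : p.bypass = tPath G hG u w := tPath_unique G hG u p.bypass p.bypass_isPath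
      exact Walk.support_bypass_subset p (hb ▸ (anc_iff G hG u v w).mp h)
  rw [← Nat.card_eq_finsetCard]
  exact Nat.card_congr (Equiv.subtypeEquivRight he)

lemma path_support_subset {s : Set V} (hc : (G.induce s).Connected) {a : V} (ha : a ∈ s)
    (hu : u ∈ s) : ∀ x ∈ (tPath G hG u a).support, x ∈ s := by
  obtain ⟨w⟩ : (G.induce s).Reachable ⟨a, ha⟩ ⟨u, hu⟩ := hc.preconnected _ _
  let f := (SimpleGraph.Embedding.induce s (G := G)).toHom
  have hp : ∀ x ∈ (w.map f).support, x ∈ s := by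
    intro x hx
    rw [Walk.support_map] at hx
    obtain ⟨y, hy, rfl⟩ := List.mem_map.mp hx
    exact y.2
  have hb : (w.map f).bypass = tPath G hG u a :=
    tPath_unique G hG u (w.map f).bypass (w.map f).bypass_isPath
  intro x hx
  exact hp x (Walk.support_bypass_subset _ (hb ▸ hx))

lemma isHistory_iff (l : List V) :
    (IsHistory G l ∧ l.head? = some u) ↔ l ∈ LEs (gpar G hG u) Finset.univ := by
  rw [mem_LEs]
  constructor
  · rintro ⟨⟨hnd, hcomp, hconn⟩, hhead⟩
    refine ⟨⟨hnd, Finset.eq_univ_iff_forall.mpr fun v => List.mem_toFinset.mpr (hcomp v)⟩, ?_⟩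
    rw [List.pairwise_iff_getElem]
    intro i j hi hj hij
    intro hanc
    have h1 : (G.induce {v | v ∈ l.take (i + 1)}).Connected := hconn (i + 1) (by omega)
    have ha : l[i] ∈ {v | v ∈ l.take (i + 1)} := by
      refine List.mem_iff_getElem.mpr ⟨i, by simp; omega, ?_⟩
      exact List.getElem_take
    have hu' : u ∈ {v | v ∈ l.take (i + 1)} := by
      have hl0 : l = u :: l.tail := List.eq_cons_of_mem_head? hhead
      rw [hl0, List.take_succ_cons]
      exact List.mem_cons_self
    have hb : l[j] ∈ {v | v ∈ l.take (i + 1)} := by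
      apply path_support_subset G hG u h1 ha hu'
      exact (anc_iff G hG u l[j] l[i]).mp hanc
    obtain ⟨m, hm, hml⟩ := List.mem_iff_getElem.mp hb
    have hmlen : m < i + 1 := by
      have := hm; simp at this; omega
    have : l[m]'(by omega) = l[j] := by rw [← hml]; exact (List.getElem_take).symm
    have := (List.Nodup.getElem_inj_iff hnd).mp this
    omega
  · rintro ⟨⟨hnd, hft⟩, hpw⟩
    have hcomp : ∀ v, v ∈ l := fun v => List.mem_toFinset.mp (hft ▸ Finset.mem_univ v)
    have hnenil : l ≠ [] := fun h => by rw [h] at hcomp; exact absurd (hcomp u) List.not_mem_nil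
    have hhead : l.head? = some u := by
      obtain ⟨h, t, rfl⟩ := List.exists_cons_of_ne_nil hnenil
      have hh : h = u := by
        rcases eq_or_ne h u with h' | h'
        · exact h'
        have hut : u ∈ t := by
          rcases List.mem_cons.mp (hcomp u) with h'' | h''
          · exact absurd h''.symm h'
          · exact h''
        exact absurd (anc_u_all G hG u h) ((List.pairwise_cons.mp hpw).1 u hut)
      rw [hh]; rfl
    refine ⟨⟨hnd, hcomp, ?_⟩, hhead⟩
    intro k hk
    set s : Set V := {v | v ∈ l.take k} with hs
    have hcross : ∀ a ∈ l.take k, ∀ b ∈ l.drop k, ¬ Anc (gpar G hG u) b a := by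
      have := hpw
      rw [← List.take_append_drop k l] at this
      exact (List.pairwise_append.mp this).2.2
    have hclosed : ∀ v ∈ s, gpar G hG u v ∈ s := by
      intro v hv
      by_contra hgp
      have hmem : gpar G hG u v ∈ l.take k ++ l.drop k := by
        rw [List.take_append_drop]; exact hcomp _
      rcases List.mem_append.mp hmem with h' | h'
      · exact hgp h'
      · exact hcross v hv _ h' (anc_par _ v)
    have hu_s : u ∈ s := by
      obtain ⟨h, t, rfl⟩ := List.exists_cons_of_ne_nil hnenil
      have : h = u := Option.some_injective _ hhead
      subst this
      obtain ⟨k', rfl⟩ := Nat.exists_eq_add_of_le hk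
      rw [hs]
      simp only [Set.mem_setOf_eq]
      rw [add_comm, List.take_succ_cons]
      exact List.mem_cons_self
    have hreach : ∀ (n : ℕ) (v : V), gdepth G hG u v ≤ n → ∀ hv : v ∈ s,
        (G.induce s).Reachable ⟨v, hv⟩ ⟨u, hu_s⟩ := by
      intro n
      induction n with
      | zero =>
        intro v hv hvs
        obtain rfl : v = u := depth_zero_eq G hG u (Nat.le_zero.mp hv)
        rfl
      | succ n ih =>
        intro v hv hvs
        rcases eq_or_ne v u with rfl | hne
        · rfl
        have hadj : G.Adj v (gpar G hG u v) := adj_gpar G hG u hne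
        have hgps : gpar G hG u v ∈ s := hclosed v hvs
        have hadj2 : (G.induce s).Adj ⟨v, hvs⟩ ⟨gpar G hG u v, hgps⟩ := by
          simp [hadj]
        have hdep : gdepth G hG u (gpar G hG u v) ≤ n := by
          have := gdepth_gpar G hG u hne; omega
        exact hadj2.reachable.trans (ih (gpar G hG u v) hdep hgps)
    rw [connected_iff]
    constructor
    · intro a b
      have ha := hreach (gdepth G hG u a.1) a.1 le_rfl a.2
      have hb := hreach (gdepth G hG u b.1) b.1 le_rfl b.2
      exact ha.trans hb.symm
    · exact ⟨⟨u, hu_s⟩⟩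


lemma descF_u : descF (gpar G hG u) u = Finset.univ :=
  Finset.eq_univ_iff_forall.mpr fun x => by
    simp only [descF, Finset.mem_filter, Finset.mem_univ, true_and]
    exact anc_u_all G hG u x

lemma nHist_eq : nHist G u = (LEs (gpar G hG u) Finset.univ).card := by
  rw [nHist, ← Nat.card_eq_finsetCard]
  exact Nat.card_congr (Equiv.subtypeEquivRight fun l => isHistory_iff G hG u l)

include hG in
lemma nHist_mul :
    nHist G u * ∏ v ∈ Finset.univ.erase u, subtreeSize G u v
      = (Fintype.card V - 1).factorial := by
  have hnonempty : Nonempty V := hG.1.nonempty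
  have hpos : 0 < Fintype.card V := Fintype.card_pos
  have hkey := key_count (par := gpar G hG u) (hd_gpar G hG u) (Fintype.card V)
    Finset.univ (by simp) (fun x _ w _ => Finset.mem_univ w)
  rw [← Finset.mul_prod_erase Finset.univ _ (Finset.mem_univ u), descF_u,
    Finset.card_univ] at hkey
  have hfac : Fintype.card V * (Fintype.card V - 1).factorial
      = (Fintype.card V).factorial := by
    obtain ⟨m, hm⟩ : ∃ m, Fintype.card V = m + 1 := ⟨_, (Nat.succ_pred_eq_of_pos hpos).symm⟩
    rw [hm]
    simp [Nat.factorial_succ]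
  have hprod : ∏ v ∈ Finset.univ.erase u, subtreeSize G u v
      = ∏ v ∈ Finset.univ.erase u, (descF (gpar G hG u) v).card :=
    Finset.prod_congr rfl fun v _ => subtree_eq G hG u v
  apply Nat.eq_of_mul_eq_mul_left hpos
  rw [nHist_eq G hG u, hprod]
  calc Fintype.card V * ((LEs (gpar G hG u) Finset.univ).card
        * ∏ v ∈ Finset.univ.erase u, (descF (gpar G hG u) v).card)
      = (LEs (gpar G hG u) Finset.univ).card
        * (Fintype.card V * ∏ v ∈ Finset.univ.erase u, (descF (gpar G hG u) v).card) := by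
        ring
    _ = (Fintype.card V).factorial := hkey
    _ = Fintype.card V * (Fintype.card V - 1).factorial := hfac.symm

include hG in
lemma subtreeSize_pos (v : V) : 0 < subtreeSize G u v := by
  rw [subtree_eq G hG u v]
  refine Finset.card_pos.mpr ⟨v, ?_⟩
  simp only [descF, Finset.mem_filter, Finset.mem_univ, true_and]
  exact anc_refl _ v

noncomputable def histFinset : Finset (List V) :=
  Finset.univ.toList.permutations.toFinset.filter (fun l => IsHistory G l)

lemma mem_histFinset (l : List V) : l ∈ histFinset G ↔ IsHistory G l := by
  simp only [histFinset, Finset.mem_filter, List.mem_toFinset, List.mem_permutations]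
  constructor
  · exact fun h => h.2
  · intro h
    refine ⟨List.perm_of_nodup_nodup_toFinset_eq h.1 (Finset.nodup_toList _) ?_, h⟩
    rw [Finset.toList_toFinset]
    exact Finset.eq_univ_iff_forall.mpr fun v => List.mem_toFinset.mpr (h.2.1 v)

include hG in
lemma nHistAll_eq_sum : nHistAll G = ∑ u : V, nHist G u := by
  have hnonempty : Nonempty V := hG.1.nonempty
  obtain ⟨v₀⟩ := hnonempty
  have h1 : nHistAll G = (histFinset G).card := by
    rw [nHistAll, ← Nat.card_eq_finsetCard]
    exact Nat.card_congr (Equiv.subtypeEquivRight fun l => (mem_histFinset G l).symm)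
  have h2 : ∀ u : V, nHist G u
      = ((histFinset G).filter (fun l => l.head? = some u)).card := by
    intro u
    rw [nHist, ← Nat.card_eq_finsetCard]
    refine Nat.card_congr (Equiv.subtypeEquivRight fun l => ?_)
    rw [Finset.mem_filter, mem_histFinset]
  have h3 : histFinset G
      = Finset.univ.biUnion (fun u => (histFinset G).filter (fun l => l.head? = some u)) := by
    ext l
    simp only [Finset.mem_biUnion, Finset.mem_univ, true_and, Finset.mem_filter]
    constructor
    · intro hl
      have hne : l ≠ [] := by
        intro h
        have := ((mem_histFinset G l).mp hl).2.1 v₀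
        rw [h] at this
        exact absurd this List.not_mem_nil
      obtain ⟨h, t, rfl⟩ := List.exists_cons_of_ne_nil hne
      exact ⟨h, hl, rfl⟩
    · rintro ⟨u, hl, -⟩
      exact hl
  rw [h1, h3, Finset.card_biUnion]
  · exact Finset.sum_congr rfl fun u _ => (h2 u).symm
  · intro u₁ _ u₂ _ hne
    simp only [Finset.disjoint_left, Finset.mem_filter]
    rintro l ⟨-, h1'⟩ ⟨-, h2'⟩
    rw [h1'] at h2'
    exact hne (Option.some_injective _ h2')

end TreeAux

end Aux

theorem stmt2 [Fintype V] [DecidableEq V] (G : SimpleGraph V) (hG : G.IsTree) :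
    nHistAll G =
      ∑ u : V, Nat.factorial (Fintype.card V - 1) /
        ∏ v ∈ Finset.univ.erase u, subtreeSize G u v := by
  rw [TreeAux.nHistAll_eq_sum G hG]
  refine Finset.sum_congr rfl fun u _ => ?_
  have hpos : 0 < ∏ v ∈ Finset.univ.erase u, subtreeSize G u v :=
    Finset.prod_pos fun v _ => TreeAux.subtreeSize_pos G hG u v
  rw [← TreeAux.nHist_mul G hG u, Nat.mul_div_cancel _ hpos]
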